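/- Fix c ∈ [π/2, 2π] and define f₂(θ) := 1/cos θ + tan θ + c − π/2 − 2θ + 1. Then for every θ satisfying 0 ≤ θ ≤ c/2 − π/4 and θ < π/2, one has: f₂(θ) ≥ f₂(c/2 − π/4) if π/2 ≤ c ≤ 5π/6, and f₂(θ) ≥ f₂(π/6) = √3 + c − 5π/6 + 1 if 5π/6 < c ≤ 2π. That is, on this domain f₂ attains its minimum at θ = c/2 − π/4 or θ = π/6, respectively. -/

import Mathlib

open Real

/-- The length of the Type-2 (Isbell-type) inspection curve with deployment angle `θ`
for an arc of length `c`. -/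
noncomputable def f2 (c θ : ℝ) : ℝ :=
  1 / Real.cos θ + Real.tan θ + c - π/2 - 2*θ + 1

noncomputable def gAux (θ : ℝ) : ℝ := 1 / Real.cos θ + Real.tan θ - 2*θ

lemma hasDerivAt_gAux (θ : ℝ) (h : Real.cos θ ≠ 0) :
    HasDerivAt gAux (Real.sin θ / Real.cos θ ^ 2 + 1 / Real.cos θ ^ 2 - 2) θ := by
  have h1 : HasDerivAt (fun x => 1 / Real.cos x) (Real.sin θ / Real.cos θ ^ 2) θ := by
    have := (Real.hasDerivAt_cos θ).inv h
    simpa [one_div, neg_div, Pi.inv_def] using this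
  have h2 := Real.hasDerivAt_tan h
  have h3 : HasDerivAt (fun x : ℝ => 2 * x) 2 θ := by
    simpa using (hasDerivAt_id θ).const_mul 2
  exact (h1.add h2).sub h3

lemma cos_pos_aux {x : ℝ} (h0 : -(π/2) < x) (h1 : x < π/2) : 0 < Real.cos x :=
  Real.cos_pos_of_mem_Ioo ⟨h0, h1⟩

lemma gAux_anti : AntitoneOn gAux (Set.Icc 0 (π/6)) := by
  have hpi := Real.pi_pos
  have hcos : ∀ x ∈ Set.Icc (0:ℝ) (π/6), 0 < Real.cos x := by
    intro x hx
    exact cos_pos_aux (by linarith [hx.1]) (by linarith [hx.2])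
  have : StrictAntiOn gAux (Set.Icc 0 (π/6)) := by
    apply strictAntiOn_of_deriv_neg (convex_Icc _ _)
    · intro x hx
      exact (hasDerivAt_gAux x (hcos x hx).ne').continuousAt.continuousWithinAt
    · intro x hx
      rw [interior_Icc] at hx
      have hc := hcos x ⟨hx.1.le, hx.2.le⟩
      rw [(hasDerivAt_gAux x hc.ne').deriv]
      have hs : Real.sin x < 1/2 := by
        have := Real.strictMonoOn_sin (a := x) (b := π/6)
          ⟨by linarith [hx.1], by linarith [hx.2]⟩ ⟨by linarith, by linarith⟩ hx.2
        rwa [Real.sin_pi_div_six] at this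
      have hs0 : 0 ≤ Real.sin x := Real.sin_nonneg_of_nonneg_of_le_pi hx.1.le (by linarith [hx.2])
      have hD : 0 < Real.cos x ^ 2 := by positivity
      rw [← add_div, sub_neg]
      rw [div_lt_iff₀ hD, Real.cos_sq']
      nlinarith
  exact this.antitoneOn

lemma gAux_mono : MonotoneOn gAux (Set.Ico (π/6) (π/2)) := by
  have hpi := Real.pi_pos
  have hcos : ∀ x ∈ Set.Ico (π/6) (π/2), 0 < Real.cos x := by
    intro x hx
    exact cos_pos_aux (by linarith [hx.1]) hx.2
  have : StrictMonoOn gAux (Set.Ico (π/6) (π/2)) := by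
    apply strictMonoOn_of_deriv_pos (convex_Ico _ _)
    · intro x hx
      exact (hasDerivAt_gAux x (hcos x hx).ne').continuousAt.continuousWithinAt
    · intro x hx
      rw [interior_Ico] at hx
      have hc := hcos x ⟨hx.1.le, hx.2⟩
      rw [(hasDerivAt_gAux x hc.ne').deriv]
      have hs : 1/2 < Real.sin x := by
        have := Real.strictMonoOn_sin (a := π/6) (b := x)
          ⟨by linarith, by linarith⟩ ⟨by linarith [hx.1], hx.2.le⟩ hx.1
        rwa [Real.sin_pi_div_six] at this
      have hD : 0 < Real.cos x ^ 2 := by positivity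
      rw [← add_div, sub_pos, lt_div_iff₀ hD, Real.cos_sq']
      nlinarith
  exact this.monotoneOn

lemma f2_eq (c θ : ℝ) : f2 c θ = gAux θ + (c - π/2 + 1) := by
  unfold f2 gAux; ring

theorem f2_minimizers (c : ℝ) (hc : c ∈ Set.Icc (π/2) (2*π)) (θ : ℝ)
    (h1 : 0 ≤ θ) (h2 : θ ≤ c/2 - π/4) (h3 : θ < π/2) :
    (c ≤ 5*π/6 → f2 c (c/2 - π/4) ≤ f2 c θ) ∧
    (5*π/6 < c → f2 c (π/6) ≤ f2 c θ ∧ f2 c (π/6) = Real.sqrt 3 + c - 5*π/6 + 1) := by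
  have hpi := Real.pi_pos
  obtain ⟨hc1, hc2⟩ := hc
  constructor
  · intro hc5
    have ha : c/2 - π/4 ≤ π/6 := by linarith
    have hg : gAux (c/2 - π/4) ≤ gAux θ :=
      gAux_anti ⟨h1, by linarith⟩ ⟨by linarith, ha⟩ h2
    rw [f2_eq, f2_eq]; linarith
  · intro hc5
    constructor
    · have hg : gAux (π/6) ≤ gAux θ := by
        rcases le_or_gt θ (π/6) with h | h
        · exact gAux_anti ⟨h1, h⟩ ⟨by linarith, le_refl _⟩ h
        · exact gAux_mono ⟨le_refl _, by linarith⟩ ⟨h.le, h3⟩ h.le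
      rw [f2_eq, f2_eq]; linarith
    · unfold f2
      rw [Real.tan_eq_sin_div_cos, Real.sin_pi_div_six, Real.cos_pi_div_six]
      have h3 : Real.sqrt 3 > 0 := Real.sqrt_pos.2 (by norm_num)
      have hsq : Real.sqrt 3 ^ 2 = 3 := Real.sq_sqrt (by norm_num)
      field_simp
      ring_nf
      nlinarith [hsq, h3]
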